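/- Let Q be a quasi-abelian category with enough projectives and let 𝒫 be a sufficiently large class of projective objects of Q. Then for every non-positively graded cochain complex Q• = (… → Q^{-1} → Q^0) in Q there exist a non-positively graded cochain complex P• with every component P^k belonging to 𝒫 and a chain map π : P• → Q• such that (i) every component π^k : P^k → Q^k is a strict epimorphism, and (ii) for every projective object P of Q the induced map of cochain complexes of abelian groups Hom(P, P•) → Hom(P, Q•) is a quasi-isomorphism (induces isomorphisms on all cohomology groups). -/

import Mathlib

set_option linter.unusedSectionVars false
set_option maxHeartbeats 1000000


open CategoryTheory CategoryTheory.Limits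

universe v u

/-- A morphism is a strict epimorphism if it is a cokernel of some morphism. -/
def IsStrictEpi {C : Type u} [Category.{v} C] [HasZeroMorphisms C]
    {X Y : C} (f : X ⟶ Y) : Prop :=
  ∃ (Z : C) (g : Z ⟶ X) (w : g ≫ f = 0), Nonempty (IsColimit (CokernelCofork.ofπ f w))

/-- A morphism is a strict monomorphism if it is a kernel of some morphism. -/
def IsStrictMono {C : Type u} [Category.{v} C] [HasZeroMorphisms C]
    {X Y : C} (f : X ⟶ Y) : Prop :=
  ∃ (Z : C) (g : Y ⟶ Z) (w : f ≫ g = 0), Nonempty (IsLimit (KernelFork.ofι f w))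

/-- A quasi-abelian category: an additive category (preadditive with all finite limits
and colimits) in which strict epimorphisms are stable under pullback and strict
monomorphisms are stable under pushout. -/
class QuasiAbelian (C : Type u) [Category.{v} C] [Preadditive C]
    [HasFiniteLimits C] [HasFiniteColimits C] : Prop where
  pullback_strictEpi : ∀ {X Y Z : C} (f : X ⟶ Z) (g : Y ⟶ Z),
    IsStrictEpi f → IsStrictEpi (pullback.snd f g)
  pushout_strictMono : ∀ {X Y Z : C} (f : X ⟶ Y) (g : X ⟶ Z),
    IsStrictMono f → IsStrictMono (pushout.inr f g)

/-- An object `P` is projective (in the strict sense) if every morphism from `P` lifts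
along every strict epimorphism, i.e. `Hom(P, −)` sends strict epimorphisms to
surjections. -/
def IsStrictProjective {C : Type u} [Category.{v} C] [HasZeroMorphisms C] (P : C) : Prop :=
  ∀ ⦃X Y : C⦄ (f : X ⟶ Y), IsStrictEpi f → ∀ g : P ⟶ Y, ∃ h : P ⟶ X, h ≫ f = g

/-- A category has enough (strict) projectives if every object is the target of a strict
epimorphism from a projective object. -/
def HasEnoughStrictProjectives (C : Type u) [Category.{v} C] [HasZeroMorphisms C] : Prop :=
  ∀ X : C, ∃ (P : C) (p : P ⟶ X), IsStrictProjective P ∧ IsStrictEpi p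

attribute [local instance] CategoryTheory.Limits.HasFiniteBiproducts.of_hasFiniteProducts
attribute [local instance] CategoryTheory.Limits.hasBinaryBiproducts_of_finite_biproducts

/-- A class `Ps` of objects is a sufficiently large class of projectives: every member is
projective, `Ps` is closed under finite direct sums, and every projective object is a
retract of a member of `Ps`. -/
structure IsSufficientlyLarge {C : Type u} [Category.{v} C] [Preadditive C]
    [HasFiniteLimits C] [HasFiniteColimits C] (Ps : Set C) : Prop where
  projective : ∀ P ∈ Ps, IsStrictProjective P
  biprod_mem : ∀ P Q : C, P ∈ Ps → Q ∈ Ps → (P ⊞ Q) ∈ Ps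
  retract : ∀ X : C, IsStrictProjective X →
    ∃ P ∈ Ps, ∃ (i : X ⟶ P) (r : P ⟶ X), i ≫ r = 𝟙 X


section Lemmas

variable {C : Type u} [Category.{v} C] [Preadditive C] [HasFiniteLimits C] [HasFiniteColimits C]

lemma IsStrictEpi.epi {X Y : C} {f : X ⟶ Y} (h : IsStrictEpi f) : Epi f := by
  obtain ⟨Z, g, w, ⟨hc⟩⟩ := h
  constructor
  intro T u v huv
  exact Cofork.IsColimit.hom_ext hc huv

lemma IsStrictEpi.isColimitKernel {X Y : C} {f : X ⟶ Y} (h : IsStrictEpi f) :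
    Nonempty (IsColimit (CokernelCofork.ofπ f (kernel.condition f))) := by
  obtain ⟨Z, g, w, ⟨hc⟩⟩ := h
  have key : ∀ {T : C} (t : X ⟶ T), kernel.ι f ≫ t = 0 → g ≫ t = 0 := by
    intro T t ht
    rw [← kernel.lift_ι f g w, Category.assoc, ht, comp_zero]
  refine ⟨CokernelCofork.IsColimit.ofπ f (kernel.condition f)
    (fun t ht => hc.desc (CokernelCofork.ofπ t (key t ht)))
    (fun t ht => hc.fac _ WalkingParallelPair.one) (fun t ht m hm => ?_)⟩
  refine Cofork.IsColimit.hom_ext hc ?_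
  have h2 := hc.fac (CokernelCofork.ofπ t (key t ht)) WalkingParallelPair.one
  simp only [Cofork.π_ofπ, CokernelCofork.π_ofπ] at *
  rw [hm]; exact h2.symm

lemma isStrictEpi_of_splitEpi {X Y : C} (r : X ⟶ Y) (s : Y ⟶ X) (hsr : s ≫ r = 𝟙 Y) :
    IsStrictEpi r := by
  have hepi : Epi r := by
    constructor
    intro T u v huv
    have := congrArg (fun t => s ≫ t) huv
    simpa [reassoc_of% hsr] using this
  refine ⟨kernel r, kernel.ι r, kernel.condition r, ⟨CokernelCofork.IsColimit.ofπ' r (kernel.condition r) (fun {A} t ht => ⟨s ≫ t, ?_⟩)⟩⟩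
  have he : (𝟙 X - r ≫ s) ≫ r = 0 := by
    simp [Preadditive.sub_comp, Category.assoc, hsr]
  have hfac : kernel.lift r _ he ≫ kernel.ι r = 𝟙 X - r ≫ s := kernel.lift_ι _ _ _
  have : (𝟙 X - r ≫ s) ≫ t = 0 := by
    rw [← hfac, Category.assoc, ht, comp_zero]
  rw [Preadditive.sub_comp, Category.id_comp, sub_eq_zero, Category.assoc] at this
  exact this.symm

lemma IsStrictEpi.of_iso {X Y : C} (f : X ⟶ Y) [IsIso f] : IsStrictEpi f :=
  isStrictEpi_of_splitEpi f (inv f) (by simp)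

variable [QuasiAbelian C]

lemma IsStrictEpi.comp {X Y Z : C} {f : X ⟶ Y} {g : Y ⟶ Z}
    (hf : IsStrictEpi f) (hg : IsStrictEpi g) : IsStrictEpi (f ≫ g) := by
  obtain ⟨hf'⟩ := hf.isColimitKernel
  obtain ⟨hg'⟩ := hg.isColimitKernel
  have hsnd : IsStrictEpi (pullback.snd f (kernel.ι g)) :=
    QuasiAbelian.pullback_strictEpi f (kernel.ι g) hf
  have hsndepi : Epi (pullback.snd f (kernel.ι g)) := hsnd.epi
  have hepi : Epi (f ≫ g) := by
    have := hf.epi; have := hg.epi; exact epi_comp f g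
  have w : pullback.fst f (kernel.ι g) ≫ f ≫ g = 0 := by
    rw [← Category.assoc, pullback.condition, Category.assoc, kernel.condition, comp_zero]
  refine ⟨pullback f (kernel.ι g), pullback.fst f (kernel.ι g), w,
    ⟨CokernelCofork.IsColimit.ofπ' (f ≫ g) w (fun {A} t ht => ?_)⟩⟩
  -- kernel.ι f factors through pullback.fst
  have hj : (pullback.lift (kernel.ι f) 0 (by rw [kernel.condition, zero_comp]) :
      kernel f ⟶ pullback f (kernel.ι g)) ≫ pullback.fst f (kernel.ι g) = kernel.ι f :=
    pullback.lift_fst _ _ _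
  have hkf : kernel.ι f ≫ t = 0 := by
    rw [← hj, Category.assoc, ht, comp_zero]
  -- t factors through f
  obtain ⟨t', ht'⟩ := CokernelCofork.IsColimit.desc' hf' t hkf
  simp only [Cofork.π_ofπ, CokernelCofork.π_ofπ] at ht'
  -- kernel.ι g ≫ t' = 0
  have hkg : kernel.ι g ≫ t' = 0 := by
    have h1 : pullback.snd f (kernel.ι g) ≫ kernel.ι g ≫ t' = 0 := by
      rw [← Category.assoc, ← pullback.condition, Category.assoc, ht', ht]
    rwa [← cancel_epi (pullback.snd f (kernel.ι g)), comp_zero]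
  obtain ⟨u, hu⟩ := CokernelCofork.IsColimit.desc' hg' t' hkg
  simp only [Cofork.π_ofπ, CokernelCofork.π_ofπ] at hu
  refine ⟨u, ?_⟩
  rw [Category.assoc, hu, ht']

lemma IsStrictEpi.pullbackFst {X Y Z : C} (f : X ⟶ Z) {g : Y ⟶ Z} (hg : IsStrictEpi g) :
    IsStrictEpi (pullback.fst f g) := by
  have h1 : IsStrictEpi (pullback.snd g f) := QuasiAbelian.pullback_strictEpi g f hg
  have h2 : IsStrictEpi ((pullbackSymmetry f g).hom ≫ pullback.snd g f) :=
    (IsStrictEpi.of_iso _).comp h1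
  simpa using h2

end Lemmas

lemma ab_homologyMap_isIso {S T : ShortComplex AddCommGrpCat.{v}} (φ : S ⟶ T)
    (hA : ∀ y : T.X₂, T.g y = 0 → ∃ x : S.X₂, S.g x = 0 ∧ φ.τ₂ x = y)
    (hB : ∀ x : S.X₂, S.g x = 0 → (∃ y : T.X₁, T.f y = φ.τ₂ x) → ∃ a : S.X₁, S.f a = x) :
    IsIso (ShortComplex.homologyMap φ) := by
  have hg2 : ∀ x : S.X₂, T.g (φ.τ₂ x) = φ.τ₃ (S.g x) := by
    intro x
    have := congrArg (fun (u : S.X₂ ⟶ T.X₃) => u x) φ.comm₂₃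
    simpa using this
  have hf2 : ∀ a : S.X₁, φ.τ₂ (S.f a) = T.f (φ.τ₁ a) := by
    intro a
    have := congrArg (fun (u : S.X₁ ⟶ T.X₂) => u a) φ.comm₁₂
    simpa using this.symm
  let φK : AddMonoidHom.ker S.g.hom →+ AddMonoidHom.ker T.g.hom :=
    AddMonoidHom.mk' (fun x => ⟨φ.τ₂ x.1, by
      have hx := x.2
      rw [AddMonoidHom.mem_ker] at hx
      simp only [AddMonoidHom.mem_ker]
      rw [hg2, hx, map_zero]⟩)
      (by intro a b; ext; simp)
  have hcomp : ∀ a : S.X₁, φK (S.abToCycles a) = T.abToCycles (φ.τ₁ a) := by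
    intro a; ext; simp [φK, hf2]
  have hmap : ∀ x ∈ AddMonoidHom.range S.abToCycles, φK x ∈ AddMonoidHom.range T.abToCycles := by
    rintro _ ⟨a, rfl⟩
    exact ⟨φ.τ₁ a, (hcomp a).symm⟩
  let φH : (AddMonoidHom.ker S.g.hom) ⧸ AddMonoidHom.range S.abToCycles →+
      (AddMonoidHom.ker T.g.hom) ⧸ AddMonoidHom.range T.abToCycles :=
    QuotientAddGroup.map _ _ φK (fun x hx => hmap x hx)
  let γ : ShortComplex.LeftHomologyMapData φ S.abLeftHomologyData T.abLeftHomologyData :=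
    { φK := AddCommGrpCat.ofHom φK
      φH := AddCommGrpCat.ofHom φH
      commi := by ext x; rfl
      commf' := by ext a; exact hcomp a
      commπ := by ext x; rfl }
  rw [γ.homologyMap_eq]
  have hbij : Function.Bijective φH := by
    constructor
    · rw [injective_iff_map_eq_zero φH]
      intro q hq
      obtain ⟨xk, rfl⟩ := QuotientAddGroup.mk'_surjective _ q
      have h1 : (QuotientAddGroup.mk' (AddMonoidHom.range T.abToCycles)) (φK xk) = 0 := hq
      have h2 : φK xk ∈ AddMonoidHom.range T.abToCycles :=
        (QuotientAddGroup.eq_zero_iff (φK xk)).mp h1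
      obtain ⟨y, hy⟩ := h2
      have hy2 : T.f y = φ.τ₂ xk.1 := congrArg Subtype.val hy
      obtain ⟨a, ha⟩ := hB xk.1 (AddMonoidHom.mem_ker.mp xk.2) ⟨y, hy2⟩
      exact (QuotientAddGroup.eq_zero_iff xk).mpr ⟨a, Subtype.ext ha⟩
    · intro q
      obtain ⟨yk, rfl⟩ := QuotientAddGroup.mk'_surjective _ q
      obtain ⟨x, hx1, hx2⟩ := hA yk.1 (AddMonoidHom.mem_ker.mp yk.2)
      exact ⟨QuotientAddGroup.mk' _ ⟨x, hx1⟩, congrArg (QuotientAddGroup.mk' _) (Subtype.ext hx2)⟩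
  have : IsIso γ.φH := by
    rw [CategoryTheory.ConcreteCategory.isIso_iff_bijective]
    exact hbij
  infer_instance

lemma quasiIso_of_lifting {K L : ChainComplex AddCommGrpCat.{v} ℕ} (f : K ⟶ L)
    (hA : ∀ (n : ℕ) (y : L.X n), L.d n (n-1) y = 0 →
       ∃ x : K.X n, K.d n (n-1) x = 0 ∧ f.f n x = y)
    (hB : ∀ (n : ℕ) (x : K.X n), K.d n (n-1) x = 0 →
       ∀ y : L.X (n+1), L.d (n+1) n y = f.f n x → ∃ a : K.X (n+1), K.d (n+1) n a = x) :
    QuasiIso f := by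
  constructor
  intro n
  rw [quasiIsoAt_iff' f (n+1) n (n-1) (by simp) (by cases n <;> simp)]
  rw [ShortComplex.quasiIso_iff]
  exact ab_homologyMap_isIso _ (hA n) (fun x hx hy => by
    obtain ⟨y, hy⟩ := hy
    exact hB n x hx y hy)


section Construction

variable {C : Type u} [Category.{v} C] [Preadditive C]
    [HasFiniteLimits C] [HasFiniteColimits C] [QuasiAbelian C]

variable (Qc : ChainComplex C ℕ)

/-- The differential out of degree `n`, as a map to degree `n - 1` (`0` when `n = 0`). -/
def DQ : ∀ n : ℕ, Qc.X n ⟶ Qc.X (n - 1)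
  | 0 => 0
  | (n+1) => Qc.d (n+1) n

lemma DQ_eq (n : ℕ) : DQ Qc n = Qc.d n (n-1) := by
  cases n with
  | zero => exact (Qc.shape 0 0 (by simp)).symm
  | succ m => rfl

variable (Ps : Set C)

/-- Inductive data: a strict epi `π : P ⟶ Qc.X n` with `P ∈ Ps`, together with a
"cycle object" `Z → P` and a strict epi from it onto the cycles of `Qc` in degree `n`. -/
structure SData (n : ℕ) where
  P : C
  mem : P ∈ Ps
  π : P ⟶ Qc.X n
  hπ : IsStrictEpi π
  Z : C
  ι : Z ⟶ P
  hmono : Mono ι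
  z : Z ⟶ kernel (DQ Qc n)
  hz : IsStrictEpi z
  hcomm : z ≫ kernel.ι (DQ Qc n) = ι ≫ π

/-- One step of the construction: data in degree `n+1` linked to data in degree `n`. -/
structure StepData (n : ℕ) (s : SData Qc Ps n) extends SData Qc Ps (n+1) where
  δ : toSData.P ⟶ s.Z
  hιδ : toSData.ι ≫ δ = 0
  hδπ : toSData.π ≫ Qc.d (n+1) n = δ ≫ s.ι ≫ s.π
  hkerlift : ∀ ⦃T : C⦄ (h : T ⟶ toSData.P), h ≫ δ = 0 → ∃ h' : T ⟶ toSData.Z, h' ≫ toSData.ι = h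
  hlift : ∀ ⦃T : C⦄, IsStrictProjective T → ∀ (b : T ⟶ Qc.X (n+1)) (zc : T ⟶ s.Z),
    b ≫ Qc.d (n+1) n = zc ≫ s.ι ≫ s.π → ∃ a : T ⟶ toSData.P, a ≫ toSData.π = b ∧ a ≫ δ = zc

variable {Qc Ps}

lemma exists_epiFromPs (henough : HasEnoughStrictProjectives C)
    (hPs : IsSufficientlyLarge Ps) (X : C) : ∃ P : C, P ∈ Ps ∧ ∃ p : P ⟶ X, IsStrictEpi p := by
  obtain ⟨P', p, hproj, hp⟩ := henough X
  obtain ⟨P, hmem, i, r, hir⟩ := hPs.retract P' hproj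
  exact ⟨P, hmem, r ≫ p, (isStrictEpi_of_splitEpi r i hir).comp hp⟩

noncomputable def base (henough : HasEnoughStrictProjectives C)
    (hPs : IsSufficientlyLarge Ps) : SData Qc Ps 0 := by
  have h := exists_epiFromPs henough hPs (Qc.X 0)
  refine
  { P := h.choose
    mem := h.choose_spec.1
    π := h.choose_spec.2.choose
    hπ := h.choose_spec.2.choose_spec
    Z := h.choose
    ι := 𝟙 _
    hmono := inferInstance
    z := kernel.lift (DQ Qc 0) h.choose_spec.2.choose (by show _ ≫ (0 : Qc.X 0 ⟶ Qc.X 0) = 0; exact comp_zero)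
    hz := ?_
    hcomm := by rw [kernel.lift_ι, Category.id_comp] }
  · have hiso : IsIso (kernel.ι (DQ Qc 0)) := by
      show IsIso (kernel.ι (0 : Qc.X 0 ⟶ Qc.X 0))
      infer_instance
    have : kernel.lift (DQ Qc 0) h.choose_spec.2.choose
        (by show _ ≫ (0 : Qc.X 0 ⟶ Qc.X 0) = 0; exact comp_zero) =
        h.choose_spec.2.choose ≫ inv (kernel.ι (DQ Qc 0)) := by
      rw [IsIso.eq_comp_inv, kernel.lift_ι]
    rw [this]
    exact h.choose_spec.2.choose_spec.comp (IsStrictEpi.of_iso _)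

noncomputable def step (henough : HasEnoughStrictProjectives C)
    (hPs : IsSufficientlyLarge Ps) (n : ℕ) (s : SData Qc Ps n) : StepData Qc Ps n s := by
  have w1 : Qc.d (n+1) n ≫ DQ Qc n = 0 := by
    cases n with
    | zero => show _ ≫ (0 : Qc.X 0 ⟶ Qc.X 0) = 0; exact comp_zero
    | succ m => exact Qc.d_comp_d _ _ _
  set ιQ : kernel (DQ Qc n) ⟶ Qc.X n := kernel.ι _ with hιQ
  set db : Qc.X (n+1) ⟶ kernel (DQ Qc n) := kernel.lift (DQ Qc n) (Qc.d (n+1) n) w1 with hdbdef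
  have hdb : db ≫ ιQ = Qc.d (n+1) n := kernel.lift_ι _ _ _
  have h := exists_epiFromPs henough hPs (pullback db s.z)
  set P : C := h.choose with hP
  set e : P ⟶ pullback db s.z := h.choose_spec.2.choose with he'
  have he : IsStrictEpi e := h.choose_spec.2.choose_spec
  set fst := pullback.fst db s.z with hfst
  set snd := pullback.snd db s.z with hsnd
  set π' : P ⟶ Qc.X (n+1) := e ≫ fst with hπ'def
  set δ : P ⟶ s.Z := e ≫ snd with hδdef
  have hπ' : IsStrictEpi π' := he.comp (IsStrictEpi.pullbackFst db s.hz)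
  have hδπ : π' ≫ Qc.d (n+1) n = δ ≫ s.ι ≫ s.π := by
    rw [hπ'def, hδdef, Category.assoc, Category.assoc, ← hdb, ← Category.assoc fst,
      pullback.condition, Category.assoc, s.hcomm]
  set Z' := kernel δ with hZ'
  set ι' : Z' ⟶ P := kernel.ι δ with hι'
  have hιδ : ι' ≫ δ = 0 := kernel.condition δ
  have w2 : (ι' ≫ π') ≫ DQ Qc (n+1) = 0 := by
    show (ι' ≫ π') ≫ Qc.d (n+1) n = 0
    rw [Category.assoc, hδπ, ← Category.assoc, hιδ, zero_comp]
  set z' : Z' ⟶ kernel (DQ Qc (n+1)) := kernel.lift _ (ι' ≫ π') w2 with hz'def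
  have hz'ι : z' ≫ kernel.ι (DQ Qc (n+1)) = ι' ≫ π' := kernel.lift_ι _ _ _
  -- the map m : cycles of Qc in degree n+1 → pullback
  have wm : kernel.ι (DQ Qc (n+1)) ≫ db = 0 ≫ s.z := by
    rw [zero_comp, ← cancel_mono ιQ, Category.assoc, hdb, zero_comp]
    exact kernel.condition (DQ Qc (n+1))
  set m : kernel (DQ Qc (n+1)) ⟶ pullback db s.z := pullback.lift _ _ wm with hm
  have hmfst : m ≫ fst = kernel.ι (DQ Qc (n+1)) := pullback.lift_fst _ _ _
  have hmsnd : m ≫ snd = 0 := pullback.lift_snd _ _ _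
  -- u : Z' ⟶ pullback e m
  have wu : ι' ≫ e = z' ≫ m := by
    apply pullback.hom_ext
    · rw [Category.assoc, Category.assoc, hmfst, hz'ι, hπ'def, ← Category.assoc]
    · rw [Category.assoc, Category.assoc, hmsnd, comp_zero, ← hδdef]
      exact hιδ
  set u : Z' ⟶ pullback e m := pullback.lift ι' z' wu with hu
  have hufst : u ≫ pullback.fst e m = ι' := pullback.lift_fst _ _ _
  have husnd : u ≫ pullback.snd e m = z' := pullback.lift_snd _ _ _
  have wv : pullback.fst e m ≫ δ = 0 := by
    rw [hδdef, ← Category.assoc, pullback.condition, Category.assoc, hmsnd, comp_zero]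
  set v : pullback e m ⟶ Z' := kernel.lift δ _ wv with hv
  have hvι : v ≫ ι' = pullback.fst e m := kernel.lift_ι _ _ _
  have huv : u ≫ v = 𝟙 Z' := by
    haveI : Mono ι' := inferInstanceAs (Mono (kernel.ι δ))
    rw [← cancel_mono ι', Category.assoc, hvι, hufst, Category.id_comp]
  have hvu : v ≫ u = 𝟙 (pullback e m) := by
    apply pullback.hom_ext
    · rw [Category.assoc, hufst, hvι, Category.id_comp]
    · rw [Category.assoc, husnd, Category.id_comp]
      haveI : Mono (kernel.ι (DQ Qc (n+1))) := inferInstance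
      rw [← cancel_mono (kernel.ι (DQ Qc (n+1))), Category.assoc, hz'ι, ← hmfst,
        ← Category.assoc v, hvι, ← Category.assoc, pullback.condition, Category.assoc]
  have hz' : IsStrictEpi z' := by
    haveI : IsIso u := ⟨v, huv, hvu⟩
    have h1 : IsStrictEpi (pullback.snd e m) := QuasiAbelian.pullback_strictEpi e m he
    have := (IsStrictEpi.of_iso u).comp h1
    rwa [husnd] at this
  refine
  { P := P
    mem := h.choose_spec.1
    π := π'
    hπ := hπ'
    Z := Z'
    ι := ι'
    hmono := inferInstanceAs (Mono (kernel.ι δ))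
    z := z'
    hz := hz'
    hcomm := hz'ι
    δ := δ
    hιδ := hιδ
    hδπ := hδπ
    hkerlift := ?_
    hlift := ?_ }
  · intro T t ht
    exact ⟨kernel.lift δ t ht, kernel.lift_ι _ _ _⟩
  · intro T hT b zc hbzc
    have wb : b ≫ db = zc ≫ s.z := by
      rw [← cancel_mono ιQ, Category.assoc, Category.assoc, hdb, s.hcomm, hbzc]
    obtain ⟨a, ha⟩ := hT e he (pullback.lift b zc wb)
    refine ⟨a, ?_, ?_⟩
    · show a ≫ (e ≫ fst) = b
      rw [← Category.assoc, ha, pullback.lift_fst]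
    · show a ≫ (e ≫ snd) = zc
      rw [← Category.assoc, ha, pullback.lift_snd]

noncomputable def seq (henough : HasEnoughStrictProjectives C)
    (hPs : IsSufficientlyLarge Ps) : ∀ n : ℕ, SData Qc Ps n := fun n =>
  Nat.rec (base henough hPs) (fun n s => (step henough hPs n s).toSData) n

noncomputable def stepOf (henough : HasEnoughStrictProjectives C)
    (hPs : IsSufficientlyLarge Ps) (n : ℕ) :
    StepData Qc Ps n (seq henough hPs n) :=
  step henough hPs n (seq henough hPs n)

lemma seq_succ (henough : HasEnoughStrictProjectives C) (hPs : IsSufficientlyLarge Ps) (n : ℕ) :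
    seq (Qc := Qc) henough hPs (n+1) = (stepOf henough hPs n).toSData := rfl

end Construction


/-- Let `Q` be a quasi-abelian category with enough projectives and `Ps` a sufficiently
large class of projectives.  Every non-positively graded cochain complex `Q•`
(encoded as an `ℕ`-indexed chain complex, `Q^{-k} = Qc.X k`) admits a chain map
`π : P• ⟶ Q•` from a complex with all components in `Ps`, such that every component of
`π` is a strict epimorphism and for every projective `P` the induced map of complexes of
abelian groups `Hom(P, P•) ⟶ Hom(P, Q•)` is a quasi-isomorphism. -/
theorem exists_projective_resolution_of_complex
    {C : Type u} [Category.{v} C] [Preadditive C]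
    [HasFiniteLimits C] [HasFiniteColimits C] [QuasiAbelian C]
    (henough : HasEnoughStrictProjectives C)
    (Ps : Set C) (hPs : IsSufficientlyLarge Ps)
    (Qc : ChainComplex C ℕ) :
    ∃ (Pc : ChainComplex C ℕ) (π : Pc ⟶ Qc),
      (∀ k : ℕ, Pc.X k ∈ Ps) ∧
      (∀ k : ℕ, IsStrictEpi (π.f k)) ∧
      (∀ P : C, IsStrictProjective P →
        QuasiIso (((preadditiveCoyoneda.obj (Opposite.op P)).mapHomologicalComplex
          (ComplexShape.down ℕ)).map π)) := by
  classical
  let S : ∀ n : ℕ, SData Qc Ps n := seq henough hPs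
  let St : ∀ n : ℕ, StepData Qc Ps n (S n) := stepOf henough hPs
  haveI hmono : ∀ n, Mono (S n).ι := fun n => (S n).hmono
  -- the chain complex of projectives
  have hsq : ∀ n : ℕ, ((St (n+1)).δ ≫ (S (n+1)).ι) ≫ ((St n).δ ≫ (S n).ι) = 0 := by
    intro n
    have h : (S (n+1)).ι ≫ (St n).δ = 0 := (St n).hιδ
    exact (Category.assoc _ _ _).trans ((congrArg _
      ((Category.assoc _ _ _).symm.trans ((congrArg (· ≫ (S n).ι) h).trans zero_comp))).trans
      comp_zero)
  let Pc : ChainComplex C ℕ :=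
    ChainComplex.of (fun n => (S n).P) (fun n => (St n).δ ≫ (S n).ι) hsq
  have hPcd : ∀ n : ℕ, Pc.d (n+1) n = (St n).δ ≫ (S n).ι := fun n =>
    ChainComplex.of_d (fun n => (S n).P) (fun n => (St n).δ ≫ (S n).ι) n
  let π : Pc ⟶ Qc :=
    { f := fun n => (S n).π
      comm' := by
        rintro i j (rfl : j + 1 = i)
        rw [hPcd j]
        show (St j).toSData.π ≫ Qc.d (j+1) j = ((St j).δ ≫ (S j).ι) ≫ (S j).π
        rw [Category.assoc]
        exact (St j).hδπ }
  refine ⟨Pc, π, fun k => (S k).mem, fun k => (S k).hπ, ?_⟩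
  intro P hP
  apply quasiIso_of_lifting
  · -- hA
    intro n y hy
    have hy' : (y ≫ Qc.d n (n-1) : P ⟶ Qc.X (n-1)) = 0 := hy
    have hyD : y ≫ DQ Qc n = 0 := by rw [DQ_eq]; exact hy'
    obtain ⟨w, hw⟩ := hP (S n).z (S n).hz (kernel.lift (DQ Qc n) y hyD)
    refine ⟨w ≫ (S n).ι, ?_, ?_⟩
    · show (w ≫ (S n).ι) ≫ Pc.d n (n-1) = 0
      cases n with
      | zero =>
        rw [Pc.shape 0 0 (by simp), comp_zero]
      | succ m =>
        show (w ≫ (S (m+1)).ι) ≫ Pc.d (m+1) m = 0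
        rw [hPcd m]
        show (w ≫ (St m).toSData.ι) ≫ (St m).δ ≫ (S m).ι = 0
        have h : (S (m+1)).ι ≫ (St m).δ = 0 := (St m).hιδ
        exact (Category.assoc _ _ _).trans ((congrArg _
          ((Category.assoc _ _ _).symm.trans ((congrArg (· ≫ (S m).ι) h).trans zero_comp))).trans
          comp_zero)
    · show (w ≫ (S n).ι) ≫ (S n).π = y
      rw [Category.assoc, ← (S n).hcomm, ← Category.assoc, hw]
      exact kernel.lift_ι _ _ _
  · -- hB
    intro n x hx y hy
    have hy' : (y ≫ Qc.d (n+1) n : P ⟶ Qc.X n) = x ≫ (S n).π := hy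
    -- factor x through the cycle object
    have hfac : ∃ x' : P ⟶ (S n).Z, x' ≫ (S n).ι = x := by
      cases n with
      | zero => exact ⟨x, Category.comp_id x⟩
      | succ m =>
        have hx' : (x ≫ Pc.d (m+1) m : P ⟶ (S m).P) = 0 := hx
        rw [hPcd m] at hx'
        have : x ≫ (St m).δ = 0 := by
          haveI := (S m).hmono
          exact (cancel_mono ((S m).ι)).mp ((Category.assoc _ _ _).trans (hx'.trans zero_comp.symm))
        exact (St m).hkerlift x this
    obtain ⟨x', hx'ι⟩ := hfac
    obtain ⟨a, ha1, ha2⟩ := (St n).hlift hP y x' (by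
      rw [← Category.assoc, hx'ι]
      exact hy')
    refine ⟨a, ?_⟩
    show a ≫ Pc.d (n+1) n = x
    rw [hPcd n, ← Category.assoc]
    show (a ≫ (St n).δ) ≫ (S n).ι = x
    rw [ha2, hx'ι]
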